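/- The minimal norms of representatives of the 14 nonzero cosets of M in its dual M*, where M has Gram matrix [[3,2,0],[2,3,0],[0,0,3]], are exactly 1/3, 2/5, 3/5, 11/15 and 14/15 (each value attained); in particular every nonzero coset of M in M* contains a vector of norm at most 14/15. -/

import Mathlib

open scoped Matrix

/-- The Gram matrix of `M`. -/
def B19 : Matrix (Fin 3) (Fin 3) ℚ := !![3, 2, 0; 2, 3, 0; 0, 0, 3]

/-- The quadratic form (norm) on `M ⊗ ℚ` in the basis coordinates. -/
def Q19 (x : Fin 3 → ℚ) : ℚ := x ⬝ᵥ (B19 *ᵥ x)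

/-- Membership in the dual `M*`: all inner products with the basis of `M` are integers. -/
def inDual19 (x : Fin 3 → ℚ) : Prop := ∀ i, ∃ k : ℤ, (B19 *ᵥ x) i = (k : ℚ)

/-- Membership in `M` itself: integral coordinates. -/
def isIntVec19 (x : Fin 3 → ℚ) : Prop := ∀ i, ∃ k : ℤ, x i = (k : ℚ)

/- ### Auxiliary integer lemmas -/

lemma sq_box19 (a b : ℤ) (h : 3*a*a - 4*a*b + 3*b*b ≤ 2) :
    -1 ≤ a ∧ a ≤ 1 ∧ -1 ≤ b ∧ b ≤ 1 := by
  refine ⟨?_, ?_, ?_, ?_⟩ <;>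
    nlinarith [sq_nonneg (a-b), sq_nonneg (a+b), sq_nonneg a, sq_nonneg b,
      sq_nonneg (a-1), sq_nonneg (a+1), sq_nonneg (b-1), sq_nonneg (b+1)]

lemma N_nonneg19 (a b : ℤ) : 0 ≤ 3*a*a - 4*a*b + 3*b*b := by
  nlinarith [sq_nonneg (a-b), sq_nonneg (a+b)]

lemma N_two19 (a b : ℤ) (h : (a+b)%5 = 2 ∨ (a+b)%5 = 3) : 2 ≤ 3*a*a - 4*a*b + 3*b*b := by
  by_contra hc
  push_neg at hc
  obtain ⟨h1,h2,h3,h4⟩ := sq_box19 a b (by omega)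
  interval_cases a <;> interval_cases b <;> omega

lemma N_three19 (a b : ℤ) (h : (a+b)%5 = 1 ∨ (a+b)%5 = 4) : 3 ≤ 3*a*a - 4*a*b + 3*b*b := by
  by_contra hc
  push_neg at hc
  obtain ⟨h1,h2,h3,h4⟩ := sq_box19 a b (by omega)
  interval_cases a <;> interval_cases b <;> omega

lemma C_one19 (c : ℤ) (h : c%3 = 1 ∨ c%3 = 2) : 1 ≤ c*c := by
  have hc : c ≠ 0 := by omega
  rcases lt_or_gt_of_ne hc with h' | h' <;> nlinarith

/- ### Structure of dual vectors -/

lemma dual_triple19 (z : Fin 3 → ℚ) (hz : inDual19 z) :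
    ∃ a b c : ℤ, z 0 = ((3*a-2*b : ℤ):ℚ)/5 ∧ z 1 = ((3*b-2*a : ℤ):ℚ)/5 ∧ z 2 = (c:ℚ)/3 ∧
      Q19 z = ((3*a*a-4*a*b+3*b*b : ℤ):ℚ)/5 + ((c*c : ℤ):ℚ)/3 := by
  obtain ⟨a, ha⟩ := hz 0
  obtain ⟨b, hb⟩ := hz 1
  obtain ⟨c, hc⟩ := hz 2
  norm_num [B19, Matrix.mulVec, dotProduct, Fin.sum_univ_three, Matrix.cons_val_two, Matrix.tail_cons, Matrix.head_cons] at ha hb hc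
  have h0 : z 0 = ((3*a-2*b : ℤ):ℚ)/5 := by push_cast; field_simp; linarith
  have h1 : z 1 = ((3*b-2*a : ℤ):ℚ)/5 := by push_cast; field_simp; linarith
  have h2 : z 2 = (c:ℚ)/3 := by field_simp; linarith
  refine ⟨a, b, c, h0, h1, h2, ?_⟩
  norm_num [Q19, B19, Matrix.mulVec, dotProduct, Fin.sum_univ_three]
  rw [h0, h1, h2]; push_cast; field_simp; ring

lemma div5_int19 (n : ℤ) : (∃ k : ℤ, (n:ℚ)/5 = (k:ℚ)) ↔ 5 ∣ n := by
  constructor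
  · rintro ⟨k, hk⟩
    refine ⟨k, ?_⟩
    have : (n:ℚ) = ((5*k : ℤ):ℚ) := by push_cast; linarith [hk]
    exact_mod_cast this
  · rintro ⟨k, rfl⟩
    exact ⟨k, by push_cast; ring⟩

lemma div3_int19 (n : ℤ) : (∃ k : ℤ, (n:ℚ)/3 = (k:ℚ)) ↔ 3 ∣ n := by
  constructor
  · rintro ⟨k, hk⟩
    refine ⟨k, ?_⟩
    have : (n:ℚ) = ((3*k : ℤ):ℚ) := by push_cast; linarith [hk]
    exact_mod_cast this
  · rintro ⟨k, rfl⟩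
    exact ⟨k, by push_cast; ring⟩

lemma coset_iff19 (z x : Fin 3 → ℚ) (a b c a' b' c' : ℤ)
    (hz0 : z 0 = ((3*a-2*b : ℤ):ℚ)/5) (hz1 : z 1 = ((3*b-2*a : ℤ):ℚ)/5) (hz2 : z 2 = (c:ℚ)/3)
    (hx0 : x 0 = ((3*a'-2*b' : ℤ):ℚ)/5) (hx1 : x 1 = ((3*b'-2*a' : ℤ):ℚ)/5) (hx2 : x 2 = (c':ℚ)/3) :
    isIntVec19 (z - x) ↔ ((a+b)%5 = (a'+b')%5 ∧ c%3 = c'%3) := by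
  have e0 : (z - x) 0 = (((3*a-2*b) - (3*a'-2*b') : ℤ):ℚ)/5 := by
    simp [Pi.sub_apply, hz0, hx0]; ring
  have e1 : (z - x) 1 = (((3*b-2*a) - (3*b'-2*a') : ℤ):ℚ)/5 := by
    simp [Pi.sub_apply, hz1, hx1]; ring
  have e2 : (z - x) 2 = ((c - c' : ℤ):ℚ)/3 := by
    simp [Pi.sub_apply, hz2, hx2]; ring
  constructor
  · intro h
    have h0 := (div5_int19 _).1 (e0 ▸ h 0)
    have h2 := (div3_int19 _).1 (e2 ▸ h 2)
    omega
  · rintro ⟨h5, h3⟩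
    intro i
    fin_cases i
    · show ∃ k : ℤ, (z - x) 0 = (k:ℚ)
      rw [e0]; exact (div5_int19 _).2 (by omega)
    · show ∃ k : ℤ, (z - x) 1 = (k:ℚ)
      rw [e1]; exact (div5_int19 _).2 (by omega)
    · show ∃ k : ℤ, (z - x) 2 = (k:ℚ)
      rw [e2]; exact (div3_int19 _).2 (by omega)

lemma int_iff19 (x : Fin 3 → ℚ) (a b c : ℤ)
    (hx0 : x 0 = ((3*a-2*b : ℤ):ℚ)/5) (hx1 : x 1 = ((3*b-2*a : ℤ):ℚ)/5) (hx2 : x 2 = (c:ℚ)/3) :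
    isIntVec19 x ↔ (5 ∣ a + b ∧ 3 ∣ c) := by
  constructor
  · intro h
    have h0 := (div5_int19 _).1 (hx0 ▸ h 0)
    have h2 := (div3_int19 _).1 (hx2 ▸ h 2)
    omega
  · rintro ⟨h5, h3⟩
    intro i
    fin_cases i
    · show ∃ k : ℤ, x 0 = (k:ℚ)
      rw [hx0]; exact (div5_int19 _).2 (by omega)
    · show ∃ k : ℤ, x 1 = (k:ℚ)
      rw [hx1]; exact (div5_int19 _).2 (by omega)
    · show ∃ k : ℤ, x 2 = (k:ℚ)
      rw [hx2]; exact (div3_int19 _).2 (by omega)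

/- ### Explicit representatives -/

def rv19 (p q t : ℤ) : Fin 3 → ℚ := ![((3*p-2*q : ℤ):ℚ)/5, ((3*q-2*p : ℤ):ℚ)/5, (t:ℚ)/3]

lemma rv19_0 (p q t : ℤ) : rv19 p q t 0 = ((3*p-2*q : ℤ):ℚ)/5 := rfl
lemma rv19_1 (p q t : ℤ) : rv19 p q t 1 = ((3*q-2*p : ℤ):ℚ)/5 := rfl
lemma rv19_2 (p q t : ℤ) : rv19 p q t 2 = (t:ℚ)/3 := rfl

lemma rv19_dual (p q t : ℤ) : inDual19 (rv19 p q t) := by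
  intro i
  fin_cases i
  · exact ⟨p, by norm_num [rv19, B19, Matrix.mulVec, dotProduct, Fin.sum_univ_three]; push_cast; ring⟩
  · exact ⟨q, by norm_num [rv19, B19, Matrix.mulVec, dotProduct, Fin.sum_univ_three]; push_cast; ring⟩
  · exact ⟨t, by norm_num [rv19, B19, Matrix.mulVec, dotProduct, Fin.sum_univ_three, Matrix.cons_val_two, Matrix.tail_cons, Matrix.head_cons]; ring⟩

lemma rv19_Q (p q t : ℤ) :
    Q19 (rv19 p q t) = ((3*p*p-4*p*q+3*q*q : ℤ):ℚ)/5 + ((t*t : ℤ):ℚ)/3 := by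
  norm_num [Q19, rv19, B19, Matrix.mulVec, dotProduct, Fin.sum_univ_three]
  push_cast
  ring

/- ### Lower-bound combination -/

lemma low_bound19 (a' b' c' : ℤ) (n m : ℤ) (hN : n ≤ 3*a'*a' - 4*a'*b' + 3*b'*b')
    (hC : m ≤ c'*c') (w : ℚ) (hw : w ≤ (n:ℚ)/5 + (m:ℚ)/3) :
    w ≤ ((3*a'*a'-4*a'*b'+3*b'*b' : ℤ):ℚ)/5 + ((c'*c' : ℤ):ℚ)/3 := by
  have h1 : (n:ℚ) ≤ ((3*a'*a'-4*a'*b'+3*b'*b' : ℤ):ℚ) := by exact_mod_cast hN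
  have h2 : (m:ℚ) ≤ ((c'*c' : ℤ):ℚ) := by exact_mod_cast hC
  linarith

/-- Master lemma: if `rv19 p q t` lies in the coset of `x` and its norm is a lower bound for
all norms in the coset, it is a minimal representative. -/
lemma master19 (x : Fin 3 → ℚ) (a b c : ℤ)
    (hx0 : x 0 = ((3*a-2*b : ℤ):ℚ)/5) (hx1 : x 1 = ((3*b-2*a : ℤ):ℚ)/5) (hx2 : x 2 = (c:ℚ)/3)
    (p q t : ℤ) (hpq : (p+q)%5 = (a+b)%5) (ht : t%3 = c%3)
    (hlow : ∀ a' b' c' : ℤ, (a'+b')%5 = (a+b)%5 → c'%3 = c%3 →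
      ((3*p*p-4*p*q+3*q*q : ℤ):ℚ)/5 + ((t*t : ℤ):ℚ)/3 ≤
        ((3*a'*a'-4*a'*b'+3*b'*b' : ℤ):ℚ)/5 + ((c'*c' : ℤ):ℚ)/3) :
    inDual19 (rv19 p q t) ∧ isIntVec19 (rv19 p q t - x) ∧
      Q19 (rv19 p q t) = ((3*p*p-4*p*q+3*q*q : ℤ):ℚ)/5 + ((t*t : ℤ):ℚ)/3 ∧
      ∀ z, inDual19 z → isIntVec19 (z - x) → Q19 (rv19 p q t) ≤ Q19 z := by
  refine ⟨rv19_dual p q t, ?_, rv19_Q p q t, ?_⟩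
  · exact (coset_iff19 _ x p q t a b c (rv19_0 p q t) (rv19_1 p q t) (rv19_2 p q t)
      hx0 hx1 hx2).2 ⟨hpq, ht⟩
  · intro z hz hzx
    obtain ⟨a', b', c', hz0, hz1, hz2, hQz⟩ := dual_triple19 z hz
    obtain ⟨h5, h3⟩ := (coset_iff19 z x a' b' c' a b c hz0 hz1 hz2 hx0 hx1 hx2).1 hzx
    rw [rv19_Q, hQz]
    exact hlow a' b' c' h5 h3

theorem stmt_19 :
    (∀ x, inDual19 x → ¬ isIntVec19 x →
      ∃ y, inDual19 y ∧ isIntVec19 (y - x) ∧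
        Q19 y ∈ ({1/3, 2/5, 3/5, 11/15, 14/15} : Set ℚ) ∧
        ∀ z, inDual19 z → isIntVec19 (z - x) → Q19 y ≤ Q19 z) ∧
    (∀ v ∈ ({1/3, 2/5, 3/5, 11/15, 14/15} : Set ℚ),
      ∃ x, inDual19 x ∧ ¬ isIntVec19 x ∧ Q19 x = v ∧
        ∀ z, inDual19 z → isIntVec19 (z - x) → Q19 x ≤ Q19 z) ∧
    (∀ x, inDual19 x → ¬ isIntVec19 x →
      ∃ y, inDual19 y ∧ isIntVec19 (y - x) ∧ Q19 y ≤ 14/15) := by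
  have part1 : ∀ x, inDual19 x → ¬ isIntVec19 x →
      ∃ y, inDual19 y ∧ isIntVec19 (y - x) ∧
        Q19 y ∈ ({1/3, 2/5, 3/5, 11/15, 14/15} : Set ℚ) ∧
        ∀ z, inDual19 z → isIntVec19 (z - x) → Q19 y ≤ Q19 z := by
    intro x hx hnx
    obtain ⟨a, b, c, hx0, hx1, hx2, _⟩ := dual_triple19 x hx
    rw [int_iff19 x a b c hx0 hx1 hx2] at hnx
    have hr : 0 ≤ (a+b)%5 ∧ (a+b)%5 < 5 := ⟨Int.emod_nonneg _ (by norm_num), Int.emod_lt_of_pos _ (by norm_num)⟩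
    have hs : 0 ≤ c%3 ∧ c%3 < 3 := ⟨Int.emod_nonneg _ (by norm_num), Int.emod_lt_of_pos _ (by norm_num)⟩
    have hne : ¬((a+b)%5 = 0 ∧ c%3 = 0) := by omega
    -- helper to discharge each case
    have H : ∀ p q t : ℤ, (p+q)%5 = (a+b)%5 → t%3 = c%3 →
        (((3*p*p-4*p*q+3*q*q : ℤ):ℚ)/5 + ((t*t : ℤ):ℚ)/3 ∈ ({1/3, 2/5, 3/5, 11/15, 14/15} : Set ℚ)) →
        (∀ a' b' c' : ℤ, (a'+b')%5 = (a+b)%5 → c'%3 = c%3 →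
          ((3*p*p-4*p*q+3*q*q : ℤ):ℚ)/5 + ((t*t : ℤ):ℚ)/3 ≤
            ((3*a'*a'-4*a'*b'+3*b'*b' : ℤ):ℚ)/5 + ((c'*c' : ℤ):ℚ)/3) →
        ∃ y, inDual19 y ∧ isIntVec19 (y - x) ∧
          Q19 y ∈ ({1/3, 2/5, 3/5, 11/15, 14/15} : Set ℚ) ∧
          ∀ z, inDual19 z → isIntVec19 (z - x) → Q19 y ≤ Q19 z := by
      intro p q t hpq ht hmem hlow
      obtain ⟨h1, h2, h3, h4⟩ := master19 x a b c hx0 hx1 hx2 p q t hpq ht hlow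
      exact ⟨rv19 p q t, h1, h2, h3 ▸ hmem, h4⟩
    obtain ⟨h1, h2⟩ := hr
    obtain ⟨h3, h4⟩ := hs
    interval_cases hR : (a+b)%5 <;> interval_cases hS : c%3
    -- (0,0) impossible
    · exact absurd ⟨rfl, rfl⟩ hne
    -- (0,1) : 1/3
    · exact H 0 0 1 (by omega) (by omega) (by norm_num)
        (fun a' b' c' h5 h3' => low_bound19 a' b' c' 0 1 (N_nonneg19 a' b')
          (C_one19 c' (by omega)) _ (by norm_num))
    -- (0,2) : 1/3
    · exact H 0 0 (-1) (by omega) (by omega) (by norm_num)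
        (fun a' b' c' h5 h3' => low_bound19 a' b' c' 0 1 (N_nonneg19 a' b')
          (C_one19 c' (by omega)) _ (by norm_num))
    -- (1,0) : 3/5
    · exact H 1 0 0 (by omega) (by omega) (by norm_num)
        (fun a' b' c' h5 h3' => low_bound19 a' b' c' 3 0 (N_three19 a' b' (by omega))
          (mul_self_nonneg c') _ (by norm_num))
    -- (1,1) : 14/15
    · exact H 1 0 1 (by omega) (by omega) (by norm_num)
        (fun a' b' c' h5 h3' => low_bound19 a' b' c' 3 1 (N_three19 a' b' (by omega))
          (C_one19 c' (by omega)) _ (by norm_num))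
    -- (1,2) : 14/15
    · exact H 1 0 (-1) (by omega) (by omega) (by norm_num)
        (fun a' b' c' h5 h3' => low_bound19 a' b' c' 3 1 (N_three19 a' b' (by omega))
          (C_one19 c' (by omega)) _ (by norm_num))
    -- (2,0) : 2/5
    · exact H 1 1 0 (by omega) (by omega) (by norm_num)
        (fun a' b' c' h5 h3' => low_bound19 a' b' c' 2 0 (N_two19 a' b' (by omega))
          (mul_self_nonneg c') _ (by norm_num))
    -- (2,1) : 11/15
    · exact H 1 1 1 (by omega) (by omega) (by norm_num)
        (fun a' b' c' h5 h3' => low_bound19 a' b' c' 2 1 (N_two19 a' b' (by omega))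
          (C_one19 c' (by omega)) _ (by norm_num))
    -- (2,2) : 11/15
    · exact H 1 1 (-1) (by omega) (by omega) (by norm_num)
        (fun a' b' c' h5 h3' => low_bound19 a' b' c' 2 1 (N_two19 a' b' (by omega))
          (C_one19 c' (by omega)) _ (by norm_num))
    -- (3,0) : 2/5
    · exact H (-1) (-1) 0 (by omega) (by omega) (by norm_num)
        (fun a' b' c' h5 h3' => low_bound19 a' b' c' 2 0 (N_two19 a' b' (by omega))
          (mul_self_nonneg c') _ (by norm_num))
    -- (3,1) : 11/15
    · exact H (-1) (-1) 1 (by omega) (by omega) (by norm_num)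
        (fun a' b' c' h5 h3' => low_bound19 a' b' c' 2 1 (N_two19 a' b' (by omega))
          (C_one19 c' (by omega)) _ (by norm_num))
    -- (3,2) : 11/15
    · exact H (-1) (-1) (-1) (by omega) (by omega) (by norm_num)
        (fun a' b' c' h5 h3' => low_bound19 a' b' c' 2 1 (N_two19 a' b' (by omega))
          (C_one19 c' (by omega)) _ (by norm_num))
    -- (4,0) : 3/5
    · exact H (-1) 0 0 (by omega) (by omega) (by norm_num)
        (fun a' b' c' h5 h3' => low_bound19 a' b' c' 3 0 (N_three19 a' b' (by omega))
          (mul_self_nonneg c') _ (by norm_num))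
    -- (4,1) : 14/15
    · exact H (-1) 0 1 (by omega) (by omega) (by norm_num)
        (fun a' b' c' h5 h3' => low_bound19 a' b' c' 3 1 (N_three19 a' b' (by omega))
          (C_one19 c' (by omega)) _ (by norm_num))
    -- (4,2) : 14/15
    · exact H (-1) 0 (-1) (by omega) (by omega) (by norm_num)
        (fun a' b' c' h5 h3' => low_bound19 a' b' c' 3 1 (N_three19 a' b' (by omega))
          (C_one19 c' (by omega)) _ (by norm_num))
  refine ⟨part1, ?_, ?_⟩
  · -- part 2
    have H2 : ∀ p q t : ℤ, ¬(5 ∣ p + q ∧ 3 ∣ t) → ∀ v : ℚ,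
        ((3*p*p-4*p*q+3*q*q : ℤ):ℚ)/5 + ((t*t : ℤ):ℚ)/3 = v →
        (∀ a' b' c' : ℤ, (a'+b')%5 = (p+q)%5 → c'%3 = t%3 →
          ((3*p*p-4*p*q+3*q*q : ℤ):ℚ)/5 + ((t*t : ℤ):ℚ)/3 ≤
            ((3*a'*a'-4*a'*b'+3*b'*b' : ℤ):ℚ)/5 + ((c'*c' : ℤ):ℚ)/3) →
        ∃ x, inDual19 x ∧ ¬ isIntVec19 x ∧ Q19 x = v ∧
          ∀ z, inDual19 z → isIntVec19 (z - x) → Q19 x ≤ Q19 z := by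
      intro p q t hni v hv hlow
      obtain ⟨h1, _, h3, h4⟩ := master19 (rv19 p q t) p q t (rv19_0 p q t) (rv19_1 p q t)
        (rv19_2 p q t) p q t rfl rfl hlow
      refine ⟨rv19 p q t, h1, ?_, h3.trans hv, h4⟩
      rw [int_iff19 (rv19 p q t) p q t (rv19_0 p q t) (rv19_1 p q t) (rv19_2 p q t)]
      exact hni
    intro v hv
    simp only [Set.mem_insert_iff, Set.mem_singleton_iff] at hv
    rcases hv with rfl | rfl | rfl | rfl | rfl
    · exact H2 0 0 1 (by omega) _ (by norm_num)
        (fun a' b' c' h5 h3' => low_bound19 a' b' c' 0 1 (N_nonneg19 a' b')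
          (C_one19 c' (by omega)) _ (by norm_num))
    · exact H2 1 1 0 (by omega) _ (by norm_num)
        (fun a' b' c' h5 h3' => low_bound19 a' b' c' 2 0 (N_two19 a' b' (by omega))
          (mul_self_nonneg c') _ (by norm_num))
    · exact H2 1 0 0 (by omega) _ (by norm_num)
        (fun a' b' c' h5 h3' => low_bound19 a' b' c' 3 0 (N_three19 a' b' (by omega))
          (mul_self_nonneg c') _ (by norm_num))
    · exact H2 1 1 1 (by omega) _ (by norm_num)
        (fun a' b' c' h5 h3' => low_bound19 a' b' c' 2 1 (N_two19 a' b' (by omega))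
          (C_one19 c' (by omega)) _ (by norm_num))
    · exact H2 1 0 1 (by omega) _ (by norm_num)
        (fun a' b' c' h5 h3' => low_bound19 a' b' c' 3 1 (N_three19 a' b' (by omega))
          (C_one19 c' (by omega)) _ (by norm_num))
  · -- part 3
    intro x hx hnx
    obtain ⟨y, h1, h2, h3, _⟩ := part1 x hx hnx
    refine ⟨y, h1, h2, ?_⟩
    simp only [Set.mem_insert_iff, Set.mem_singleton_iff] at h3
    rcases h3 with h | h | h | h | h <;> rw [h] <;> norm_num
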